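/- Let $\Gamma$ be a finite tree with $T_v \in \mathbb{Z}^{V(\Gamma)}$ as before ($-\ell_v r$ at $v$, $+r$ at neighbors). Fix integers $d_v$, $b \geq 0$, and for $w \in \mathbb{Z}^{V(\Gamma)}$ with $\sum_v w_v = \sum_v d_v - |E(\Gamma)| r b$ and $w_v \equiv d_v \pmod r$, and a pair $(e,v)$ of an edge with adjacent vertex, define $t_{(e,v)}(w) = |S| b - \frac{1}{r} \sum_{v' \in S} (d_{v'} - w_{v'})$ where $S$ is the set of vertices in the connected component of $\Gamma \setminus e$ not containing $v$. Let $\bar{G}$ be the set of such $w$ with $0 \leq t_{(e,v)}(w) \leq b$ for all pairs $(e,v)$. Then for any $w, w' \in \bar{G}$, there exists a minimal path from $w$ to $w'$ (i.e., a sequence of vertices $v_1,\dots,v_m$ of $\Gamma$, not covering all of $V(\Gamma)$, with $w' = w + \sum_i T_{v_i}$) such that every intermediate point $w + T_{v_1} + \dots + T_{v_j}$ lies in $\bar{G}$, after suitable reordering of $v_1,\dots,v_m$. -/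

import Mathlib

open SimpleGraph

/-- The translation vector `T_v ∈ ℤ^{V(Γ)}`: entry `-ℓ_v r` at `v`, entry `r` at
each neighbor of `v`, and `0` elsewhere. -/
def Tvec {V : Type*} [Fintype V] [DecidableEq V] (G : SimpleGraph V)
    [DecidableRel G.Adj] (r : ℕ) (v : V) : V → ℤ :=
  fun u => if u = v then -(G.degree v * r : ℤ) else if G.Adj v u then (r : ℤ) else 0

/-- For a pair `(e, v)` of an edge with an adjacent vertex, encoded as the
ordered adjacent pair `(v, u)` (so `e = {v,u}`), the set `S` of vertices of the
connected component of `Γ ∖ e` *not* containing `v`, i.e. the component of `u`. -/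
noncomputable def sideSet {V : Type*} [Fintype V] (G : SimpleGraph V)
    (v u : V) : Finset V :=
  (Set.toFinite {w | (G.deleteEdges {s(v, u)}).Reachable w u}).toFinset

/-- `r` times the quantity `t_{(e,v)}(w) = |S| b - (1/r) ∑_{v' ∈ S} (d_{v'} - w_{v'})`
of Notation `twists` (scaled by `r` to stay in `ℤ`). -/
noncomputable def tScaled {V : Type*} [Fintype V] (G : SimpleGraph V)
    (dv : V → ℤ) (b r : ℕ) (w : V → ℤ) (v u : V) : ℤ :=
  (sideSet G v u).card * ((b : ℤ) * r) - ∑ x ∈ sideSet G v u, (dv x - w x)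

/-- Membership in `bar G_II`: `0 ≤ t_{(e,v)}(w) ≤ b` for every pair `(e,v)`. -/
def inBarG {V : Type*} [Fintype V] (G : SimpleGraph V)
    (dv : V → ℤ) (b r : ℕ) (w : V → ℤ) : Prop :=
  ∀ v u : V, G.Adj v u →
    0 ≤ tScaled G dv b r w v u ∧ tScaled G dv b r w v u ≤ (b : ℤ) * r

noncomputable def csum {V : Type*} [Fintype V] [DecidableEq V] (G : SimpleGraph V)
    [DecidableRel G.Adj] (r : ℕ) (c : V → ℕ) : V → ℤ :=
  fun a => ∑ z, (c z : ℤ) * Tvec G r z a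

namespace Aux15
set_option linter.unusedSectionVars false
set_option maxHeartbeats 1000000
open SimpleGraph
variable {V : Type*} [Fintype V] [DecidableEq V] {G : SimpleGraph V} [DecidableRel G.Adj]

lemma mem_sideSet {v u x : V} :
    x ∈ sideSet G v u ↔ (G.deleteEdges {s(v, u)}).Reachable x u := by
  simp [sideSet]

lemma u_mem_sideSet {v u : V} : u ∈ sideSet G v u :=
  mem_sideSet.2 (Reachable.refl u)

lemma del_comm (v u : V) : G.deleteEdges {s(v, u)} = G.deleteEdges {s(u, v)} := by
  rw [Sym2.eq_swap]

lemma not_reach (hG : G.IsTree) {v u : V} (h : G.Adj v u) :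
    ¬ (G.deleteEdges {s(v, u)}).Reachable v u := by
  have hb : G.IsBridge s(v, u) :=
    (isAcyclic_iff_forall_adj_isBridge.mp hG.IsAcyclic) h
  exact hb

lemma step_mem {v u x z : V} (h : G.Adj x z) (hne : s(x, z) ≠ s(v, u))
    (hx : x ∈ sideSet G v u) : z ∈ sideSet G v u := by
  rw [mem_sideSet] at hx ⊢
  have hadj : (G.deleteEdges {s(v, u)}).Adj z x := by
    rw [deleteEdges_adj]
    refine ⟨h.symm, ?_⟩
    simp only [Set.mem_singleton_iff]
    rw [Sym2.eq_swap]
    exact hne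
  exact hadj.reachable.trans hx

lemma cover (hG : G.IsTree) {v u : V} (h : G.Adj v u) (x : V) :
    x ∈ sideSet G v u ∨ x ∈ sideSet G u v := by
  have hr : G.Reachable x u := hG.isConnected.preconnected x u
  obtain ⟨p⟩ := hr
  induction p with
  | nil => exact Or.inl u_mem_sideSet
  | @cons a c d hac q ih =>
    rcases ih h with hc | hc
    · by_cases he : s(a, c) = s(v, d)
      · rw [Sym2.eq_iff] at he
        rcases he with ⟨rfl, rfl⟩ | ⟨rfl, rfl⟩
        · exact Or.inr u_mem_sideSet
        · exact Or.inl u_mem_sideSet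
      · exact Or.inl (step_mem hac.symm (fun hh => he (by rwa [Sym2.eq_swap] at hh)) hc)
    · by_cases he : s(a, c) = s(d, v)
      · rw [Sym2.eq_iff] at he
        rcases he with ⟨rfl, rfl⟩ | ⟨rfl, rfl⟩
        · exact Or.inl u_mem_sideSet
        · exact Or.inr u_mem_sideSet
      · exact Or.inr (step_mem hac.symm (fun hh => he (by rwa [Sym2.eq_swap] at hh)) hc)

lemma mem_iff_not_mem (hG : G.IsTree) {v u x : V} (h : G.Adj v u) :
    x ∈ sideSet G v u ↔ x ∉ sideSet G u v := by
  constructor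
  · intro hx hx'
    rw [mem_sideSet] at hx hx'
    rw [← del_comm] at hx'
    exact not_reach hG h (hx'.symm.trans hx)
  · intro hx
    rcases cover hG h x with hh | hh
    · exact hh
    · exact absurd hh hx

lemma not_self_mem (hG : G.IsTree) {v u : V} (h : G.Adj v u) : v ∉ sideSet G v u :=
  (mem_iff_not_mem hG h.symm).mp u_mem_sideSet

lemma reach_step (hG : G.IsTree) {y u' u'' : V} (h1 : G.Adj y u') (h2 : G.Adj y u'')
    (hne : u' ≠ u'') {a b : V} (hr : (G.deleteEdges {s(y, u'')}).Reachable a b)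
    (hb1 : b ∈ sideSet G u' y) (hb2 : b ∈ sideSet G y u'') : a ∈ sideSet G u' y := by
  obtain ⟨p⟩ := hr
  induction p with
  | nil => exact hb1
  | @cons a c d hac q ih =>
    have hc2 : c ∈ sideSet G y u'' := mem_sideSet.2 (Reachable.trans ⟨q⟩ (mem_sideSet.1 hb2))
    have hc1 : c ∈ sideSet G u' y := ih hb1 hb2
    have hGac : G.Adj a c := (deleteEdges_adj.mp hac).1
    by_cases he : s(c, a) = s(u', y)
    · rw [Sym2.eq_iff] at he
      rcases he with ⟨rfl, rfl⟩ | ⟨rfl, rfl⟩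
      · -- c = u', a = y
        exact u_mem_sideSet
      · -- c = y : contradiction with hc2
        exact absurd hc2 ((mem_iff_not_mem hG h2.symm).mp u_mem_sideSet)
    · exact step_mem hGac.symm he hc1

lemma subset_side (hG : G.IsTree) {y u' u'' : V} (h1 : G.Adj y u') (h2 : G.Adj y u'')
    (hne : u' ≠ u'') : sideSet G y u'' ⊆ sideSet G u' y := by
  intro x hx
  have hu'' : u'' ∈ sideSet G u' y := by
    refine step_mem h2 ?_ u_mem_sideSet
    intro hh
    rw [Sym2.eq_iff] at hh
    rcases hh with ⟨-, h2e⟩ | ⟨-, h2e⟩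
    · exact h2.ne h2e.symm
    · exact hne h2e.symm
  exact reach_step hG h1 h2 hne (mem_sideSet.1 hx) hu'' u_mem_sideSet

lemma exists_branch_aux (hG : G.IsTree) {y a b : V} (hr : G.Reachable a b)
    (hb : b = y ∨ ∃ u, G.Adj y u ∧ b ∈ sideSet G y u) :
    a = y ∨ ∃ u, G.Adj y u ∧ a ∈ sideSet G y u := by
  obtain ⟨p⟩ := hr
  induction p with
  | nil => exact hb
  | @cons a c d hac q ih =>
    rcases ih hb with hc | ⟨u, hyu, hcu⟩
    · subst hc
      right
      exact ⟨a, hac.symm, u_mem_sideSet⟩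
    · by_cases he : s(c, a) = s(y, u)
      · rw [Sym2.eq_iff] at he
        rcases he with ⟨rfl, rfl⟩ | ⟨rfl, rfl⟩
        · -- c = y : contradiction, y ∉ S y u
          exact absurd hcu (not_self_mem hG hyu)
        · -- a = y
          exact Or.inl rfl
      · exact Or.inr ⟨u, hyu, step_mem hac.symm he hcu⟩

lemma exists_branch (hG : G.IsTree) {x y : V} (hxy : x ≠ y) :
    ∃ u, G.Adj y u ∧ x ∈ sideSet G y u := by
  rcases exists_branch_aux hG (hG.isConnected.preconnected x y) (Or.inl rfl) with h | h
  · exact absurd h hxy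
  · exact h

lemma branch_unique (hG : G.IsTree) {y u u' x : V} (h1 : G.Adj y u) (h2 : G.Adj y u')
    (hx : x ∈ sideSet G y u) (hx' : x ∈ sideSet G y u') : u = u' := by
  by_contra hne
  have := subset_side hG h2 h1 (fun h => hne h.symm) hx
  exact ((mem_iff_not_mem hG h2).mp hx') this

lemma sideSet_decomp (hG : G.IsTree) {v u₀ : V} (h : G.Adj v u₀) :
    sideSet G u₀ v =
      insert v (((G.neighborFinset v).erase u₀).biUnion (fun u => sideSet G v u)) := by
  ext x
  simp only [Finset.mem_insert, Finset.mem_biUnion, Finset.mem_erase, mem_neighborFinset]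
  constructor
  · intro hx
    by_cases hxv : x = v
    · exact Or.inl hxv
    · obtain ⟨u, hvu, hxu⟩ := exists_branch hG hxv
      refine Or.inr ⟨u, ⟨?_, hvu⟩, hxu⟩
      rintro rfl
      exact ((mem_iff_not_mem hG h).mp hxu) hx
  · rintro (rfl | ⟨u, ⟨hu, hvu⟩, hxu⟩)
    · exact u_mem_sideSet
    · exact subset_side hG h hvu (fun hh => hu hh.symm) hxu

lemma sum_sideSet_decomp (hG : G.IsTree) {v u₀ : V} (h : G.Adj v u₀) (f : V → ℤ) :
    ∑ a ∈ sideSet G u₀ v, f a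
      = f v + ∑ u ∈ (G.neighborFinset v).erase u₀, ∑ a ∈ sideSet G v u, f a := by
  rw [sideSet_decomp hG h]
  rw [Finset.sum_insert, Finset.sum_biUnion]
  · intro a ha b hb hab
    simp only [Finset.mem_coe, Finset.mem_erase, mem_neighborFinset] at ha hb
    refine Finset.disjoint_left.2 fun x hxa hxb => ?_
    exact hab (branch_unique hG ha.2 hb.2 hxa hxb)
  · simp only [Finset.mem_biUnion, Finset.mem_erase, mem_neighborFinset]
    rintro ⟨u, ⟨hu, hvu⟩, hxu⟩
    exact (not_self_mem hG hvu) hxu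

lemma vanish (hG : G.IsTree) (x : V → ℤ) (h0 : ∑ a, x a = 0)
    (he : ∀ v u, G.Adj v u → ∑ a ∈ sideSet G v u, x a = 0) : ∀ a, x a = 0 := by
  intro v
  by_cases hv : ∃ u, G.Adj v u
  · obtain ⟨u₀, hu₀⟩ := hv
    have hd := sum_sideSet_decomp hG hu₀ x
    rw [he u₀ v hu₀.symm] at hd
    have : ∑ u ∈ (G.neighborFinset v).erase u₀, ∑ a ∈ sideSet G v u, x a = 0 := by
      refine Finset.sum_eq_zero fun u hu => ?_
      simp only [Finset.mem_erase, mem_neighborFinset] at hu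
      exact he v u hu.2
    rw [this] at hd
    linarith
  · push_neg at hv
    -- v has no neighbors; by connectivity V = {v}
    have huniv : (Finset.univ : Finset V) = {v} := by
      ext a
      simp only [Finset.mem_univ, Finset.mem_singleton, true_iff]
      by_contra hav
      obtain ⟨u, hu, _⟩ := exists_branch hG hav
      exact hv u hu
    rw [huniv, Finset.sum_singleton] at h0
    exact h0

lemma Tvec_eq (r : ℕ) (z x : V) : Tvec G r z x =
    (if x = z then -(G.degree z * r : ℤ) else 0) + (if G.Adj z x then (r:ℤ) else 0) := by
  unfold Tvec
  by_cases h : x = z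
  · subst h; simp [G.irrefl]
  · simp [h]

lemma sum_Tvec_over (r : ℕ) (z : V) (S : Finset V) :
    ∑ x ∈ S, Tvec G r z x =
      (if z ∈ S then -((G.degree z : ℤ) * (r:ℤ)) else 0) + (S.filter (G.Adj z)).card * r := by
  simp_rw [Tvec_eq]
  rw [Finset.sum_add_distrib]
  congr 1
  · rw [Finset.sum_ite_eq' S z (fun _ => -((G.degree z : ℤ) * (r:ℤ)))]
  · rw [← Finset.sum_filter, Finset.sum_const]
    simp [mul_comm]

lemma sum_Tvec_side (hG : G.IsTree) {v u : V} (h : G.Adj v u) (r : ℕ) (z : V) :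
    ∑ x ∈ sideSet G v u, Tvec G r z x
      = (if z = v then (r:ℤ) else 0) - (if z = u then (r:ℤ) else 0) := by
  rw [sum_Tvec_over]
  by_cases hzv : z = v
  · subst hzv
    have hnm : z ∉ sideSet G z u := not_self_mem hG h
    have hf : (sideSet G z u).filter (G.Adj z) = {u} := by
      ext x
      simp only [Finset.mem_filter, Finset.mem_singleton]
      constructor
      · rintro ⟨hxS, hzx⟩
        by_contra hxu
        refine hnm (step_mem hzx.symm ?_ hxS)
        intro hh
        rw [Sym2.eq_iff] at hh
        rcases hh with ⟨hxz, -⟩ | ⟨hxu', -⟩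
        · exact hzx.ne' hxz
        · exact hxu hxu'
      · rintro rfl
        exact ⟨u_mem_sideSet, h⟩
    rw [hf]
    simp [hnm, h.ne]
  · by_cases hzu : z = u
    · subst hzu
      have hmem : z ∈ sideSet G v z := u_mem_sideSet
      have hf : (sideSet G v z).filter (G.Adj z) = (G.neighborFinset z).erase v := by
        ext x
        simp only [Finset.mem_filter, Finset.mem_erase, mem_neighborFinset]
        constructor
        · rintro ⟨hxS, hzx⟩
          refine ⟨?_, hzx⟩
          rintro rfl
          exact (not_self_mem hG h) hxS
        · rintro ⟨hxv, hzx⟩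
          refine ⟨step_mem hzx ?_ hmem, hzx⟩
          intro hh
          rw [Sym2.eq_iff] at hh
          rcases hh with ⟨hzv', -⟩ | ⟨-, hxv'⟩
          · exact hzv hzv'
          · exact hxv hxv'
      rw [hf]
      have hvz : v ∈ G.neighborFinset z := by
        rw [mem_neighborFinset]; exact h.symm
      rw [Finset.card_erase_of_mem hvz, card_neighborFinset_eq_degree]
      have hd1 : 1 ≤ G.degree z := by
        rw [← card_neighborFinset_eq_degree]
        exact Finset.card_pos.2 ⟨v, hvz⟩
      have hcast : ((G.degree z - 1 : ℕ) : ℤ) = (G.degree z : ℤ) - 1 := by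
        push_cast [Nat.cast_sub hd1]
        ring
      rw [hcast]
      simp only [hmem, if_pos, hzv, ite_false, ite_true, if_neg, not_false_iff]
      ring
    · by_cases hzS : z ∈ sideSet G v u
      · have hf : (sideSet G v u).filter (G.Adj z) = G.neighborFinset z := by
          ext x
          simp only [Finset.mem_filter, mem_neighborFinset]
          constructor
          · rintro ⟨-, hzx⟩; exact hzx
          · intro hzx
            refine ⟨step_mem hzx ?_ hzS, hzx⟩
            intro hh
            rw [Sym2.eq_iff] at hh
            rcases hh with ⟨hzv', -⟩ | ⟨hzu', -⟩
            · exact hzv hzv'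
            · exact hzu hzu'
        rw [hf, card_neighborFinset_eq_degree]
        simp [hzS, hzv, hzu]
      · have hf : (sideSet G v u).filter (G.Adj z) = ∅ := by
          ext x
          simp only [Finset.mem_filter, Finset.notMem_empty, iff_false, not_and]
          intro hxS hzx
          refine hzS (step_mem hzx.symm ?_ hxS)
          intro hh
          rw [Sym2.eq_iff] at hh
          rcases hh with ⟨-, hzu'⟩ | ⟨-, hzv'⟩
          · exact hzu hzu'
          · exact hzv hzv'
        rw [hf]
        simp [hzS, hzv, hzu]

lemma sum_Tvec_total (r : ℕ) (z : V) : ∑ x, Tvec G r z x = 0 := by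
  rw [sum_Tvec_over]
  have hf : (Finset.univ.filter (G.Adj z)) = G.neighborFinset z := by
    ext x; simp [mem_neighborFinset]
  rw [hf, card_neighborFinset_eq_degree]
  simp

lemma dvd_Tvec (r : ℕ) (z x : V) : (r : ℤ) ∣ Tvec G r z x := by
  unfold Tvec
  split_ifs with h1 h2
  · exact dvd_neg.2 (dvd_mul_left _ _)
  · exact dvd_refl _
  · exact dvd_zero _

lemma dist_side (hG : G.IsTree) {v u x : V} (h : G.Adj v u) (hx : x ∈ sideSet G v u) :
    G.dist v x = G.dist u x + 1 := by
  have hconn := hG.isConnected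
  have hd1 : G.dist v u = 1 := dist_eq_one_iff_adj.2 h
  have hle : G.dist v x ≤ G.dist u x + 1 := by
    have := hconn.dist_triangle (u := v) (v := u) (w := x)
    omega
  have hge : G.dist u x + 1 ≤ G.dist v x := by
    obtain ⟨p, hp⟩ := hconn.exists_walk_length_eq_dist v x
    have he : s(v, u) ∈ p.edges := by
      by_contra hne
      have hreach : (G.deleteEdges {s(v, u)}).Reachable v x :=
        ⟨p.toDeleteEdges _ (fun e hep => by
          simp only [Set.mem_singleton_iff]
          rintro rfl
          exact hne hep)⟩
      exact (not_self_mem hG h) (mem_sideSet.2 (hreach.trans (mem_sideSet.1 hx)))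
    have hu : u ∈ p.support := p.snd_mem_support_of_mem_edges he
    have hlen : (p.takeUntil u hu).length + (p.dropUntil u hu).length = p.length := by
      have := congrArg Walk.length (p.take_spec hu)
      rwa [Walk.length_append] at this
    have h3 : G.dist u x ≤ (p.dropUntil u hu).length := dist_le _
    have h4 : 1 ≤ (p.takeUntil u hu).length := by
      by_contra h4
      push_neg at h4
      interval_cases hl : (p.takeUntil u hu).length
      exact h.ne (Walk.eq_of_length_eq_zero hl)
    omega
  omega

lemma tScaled_add (dv : V → ℤ) (b r : ℕ) (w x : V → ℤ) (v u : V) :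
    tScaled G dv b r (w + x) v u = tScaled G dv b r w v u + ∑ a ∈ sideSet G v u, x a := by
  unfold tScaled
  have hh : ∑ a ∈ sideSet G v u, (dv a - (w + x) a)
      = ∑ a ∈ sideSet G v u, (dv a - w a) - ∑ a ∈ sideSet G v u, x a := by
    rw [← Finset.sum_sub_distrib]
    refine Finset.sum_congr rfl fun a _ => ?_
    simp only [Pi.add_apply]
    ring
  rw [hh]
  ring

lemma card_side_add (hG : G.IsTree) {v u : V} (h : G.Adj v u) :
    (sideSet G v u).card + (sideSet G u v).card = Fintype.card V := by
  have hdisj : Disjoint (sideSet G v u) (sideSet G u v) := by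
    refine Finset.disjoint_left.2 fun x hx hx' => ?_
    exact (mem_iff_not_mem hG h).mp hx hx'
  have hunion : sideSet G v u ∪ sideSet G u v = Finset.univ := by
    ext x
    simp only [Finset.mem_union, Finset.mem_univ, iff_true]
    exact cover hG h x
  rw [← Finset.card_union_of_disjoint hdisj, hunion, Finset.card_univ]

lemma sum_side_add (hG : G.IsTree) {v u : V} (h : G.Adj v u) (f : V → ℤ) :
    ∑ a ∈ sideSet G v u, f a + ∑ a ∈ sideSet G u v, f a = ∑ a, f a := by
  have hdisj : Disjoint (sideSet G v u) (sideSet G u v) := by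
    refine Finset.disjoint_left.2 fun x hx hx' => ?_
    exact (mem_iff_not_mem hG h).mp hx hx'
  have hunion : sideSet G v u ∪ sideSet G u v = Finset.univ := by
    ext x
    simp only [Finset.mem_union, Finset.mem_univ, iff_true]
    exact cover hG h x
  rw [← Finset.sum_union hdisj, hunion]

lemma tScaled_symm (hG : G.IsTree) (dv : V → ℤ) (b r : ℕ) (w : V → ℤ) {v u : V}
    (h : G.Adj v u)
    (hs : ∑ a, w a = ∑ a, dv a - G.edgeFinset.card * r * b) :
    tScaled G dv b r w v u + tScaled G dv b r w u v = (b : ℤ) * r := by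
  have hne : Nonempty V := hG.isConnected.nonempty
  have hcast0 : (G.edgeFinset.card : ℤ) + 1 = (Fintype.card V : ℤ) := by
    exact_mod_cast hG.card_edgeFinset
  have hcast : (G.edgeFinset.card : ℤ) = (Fintype.card V : ℤ) - 1 := by linarith
  have hsum : ∑ a, (dv a - w a) = (G.edgeFinset.card : ℤ) * r * b := by
    rw [Finset.sum_sub_distrib, hs]
    ring
  unfold tScaled
  have hc := card_side_add hG h
  have hf := sum_side_add hG h (fun a => dv a - w a)
  have hcc : ((sideSet G v u).card : ℤ) + ((sideSet G u v).card : ℤ)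
      = (Fintype.card V : ℤ) := by exact_mod_cast hc
  have : ∑ a ∈ sideSet G v u, (dv a - w a) + ∑ a ∈ sideSet G u v, (dv a - w a)
      = (G.edgeFinset.card : ℤ) * r * b := by rw [hf, hsum]
  linear_combination ((b:ℤ)*(r:ℤ)) * hcc - this - ((r:ℤ)*(b:ℤ)) * hcast

lemma dvd_tScaled (dv : V → ℤ) (b r : ℕ) (w : V → ℤ) (v u : V)
    (hdvd : ∀ a, (r : ℤ) ∣ (dv a - w a)) : (r : ℤ) ∣ tScaled G dv b r w v u := by
  unfold tScaled
  refine dvd_sub ?_ ?_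
  · exact Dvd.intro (((sideSet G v u).card : ℤ) * b) (by ring)
  · exact Finset.dvd_sum fun a _ => hdvd a

lemma sum_side_csum (hG : G.IsTree) {v u : V} (h : G.Adj v u) (r : ℕ) (c : V → ℕ) :
    ∑ a ∈ sideSet G v u, csum G r c a = ((c v : ℤ) - (c u : ℤ)) * r := by
  unfold csum
  rw [Finset.sum_comm]
  rw [Finset.sum_congr rfl (fun z _ => by
    rw [← Finset.mul_sum, sum_Tvec_side hG h r z])]
  simp only [mul_sub, Finset.sum_sub_distrib, mul_ite, mul_zero]
  rw [Finset.sum_ite_eq' Finset.univ v (fun z => (c z : ℤ) * r),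
    Finset.sum_ite_eq' Finset.univ u (fun z => (c z : ℤ) * r)]
  simp only [Finset.mem_univ, if_pos, ite_true]
  ring

lemma sum_total_csum (r : ℕ) (c : V → ℕ) : ∑ a, csum G r c a = 0 := by
  unfold csum
  rw [Finset.sum_comm]
  rw [Finset.sum_congr rfl (fun z _ => by rw [← Finset.mul_sum, sum_Tvec_total r z])]
  simp

lemma dvd_csum (r : ℕ) (c : V → ℕ) (a : V) : (r : ℤ) ∣ csum G r c a :=
  Finset.dvd_sum fun z _ => Dvd.dvd.mul_left (dvd_Tvec r z a) _

lemma reach_dvd (f : V → ℤ) (d : ℤ) (h : ∀ v u, G.Adj v u → d ∣ f v - f u) {v u : V}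
    (hrc : G.Reachable v u) : d ∣ f v - f u := by
  obtain ⟨p⟩ := hrc
  induction p with
  | nil => simp
  | @cons a c e hac q ih =>
    have h1 := h a c hac
    have h2 := ih
    have := dvd_add h1 h2
    rwa [sub_add_sub_cancel] at this

lemma exists_coeffs (hG : G.IsTree) {r : ℕ} (hr : 0 < r) (y : V → ℤ)
    (hy0 : ∑ a, y a = 0) (hydvd : ∀ a, (r : ℤ) ∣ y a) :
    ∃ c : V → ℕ, (∃ v, c v = 0) ∧
      ∀ v u, G.Adj v u → ((c v : ℤ) - (c u : ℤ)) * r = ∑ a ∈ sideSet G v u, y a := by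
  have hne : Nonempty V := hG.isConnected.nonempty
  set D : V → ℤ := fun v => ∑ x, y x * (G.dist v x : ℤ) with hD
  have hedge : ∀ v u, G.Adj v u → D v - D u = 2 * ∑ a ∈ sideSet G v u, y a := by
    intro v u h
    have hsplit := sum_side_add hG h (fun a => y a * ((G.dist v a : ℤ) - (G.dist u a : ℤ)))
    have h1 : ∑ a ∈ sideSet G v u, y a * ((G.dist v a : ℤ) - (G.dist u a : ℤ))
        = ∑ a ∈ sideSet G v u, y a := by
      refine Finset.sum_congr rfl fun a ha => ?_
      have := dist_side hG h ha
      have hcast : (G.dist v a : ℤ) = (G.dist u a : ℤ) + 1 := by exact_mod_cast this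
      rw [hcast]; ring
    have h2 : ∑ a ∈ sideSet G u v, y a * ((G.dist v a : ℤ) - (G.dist u a : ℤ))
        = - ∑ a ∈ sideSet G u v, y a := by
      rw [← Finset.sum_neg_distrib]
      refine Finset.sum_congr rfl fun a ha => ?_
      have := dist_side hG h.symm ha
      have hcast : (G.dist u a : ℤ) = (G.dist v a : ℤ) + 1 := by exact_mod_cast this
      rw [hcast]; ring
    have h3 : ∑ a ∈ sideSet G u v, y a = - ∑ a ∈ sideSet G v u, y a := by
      have := sum_side_add hG h y
      rw [hy0] at this
      linarith
    have hDvu : D v - D u = ∑ a, y a * ((G.dist v a : ℤ) - (G.dist u a : ℤ)) := by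
      rw [hD]
      simp only []
      rw [← Finset.sum_sub_distrib]
      refine Finset.sum_congr rfl fun a _ => ?_
      ring
    rw [hDvu, ← hsplit, h1, h2, h3]
    ring
  have hdvd2 : ∀ v u, G.Adj v u → (2 * (r : ℤ)) ∣ D v - D u := by
    intro v u h
    rw [hedge v u h]
    exact mul_dvd_mul_left 2 (Finset.dvd_sum fun a _ => hydvd a)
  have hglob : ∀ v u : V, (2 * (r : ℤ)) ∣ D v - D u := fun v u =>
    reach_dvd D _ hdvd2 (hG.isConnected.preconnected v u)
  obtain ⟨v₁, -, hv₁⟩ := Finset.exists_min_image Finset.univ D Finset.univ_nonempty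
  set c : V → ℕ := fun v => ((D v - D v₁) / (2 * (r : ℤ))).toNat with hc
  have hrpos : (0 : ℤ) < 2 * r := by positivity
  have hkey : ∀ v, (c v : ℤ) * (2 * (r : ℤ)) = D v - D v₁ := by
    intro v
    have hd := hglob v v₁
    have hnn : 0 ≤ D v - D v₁ := by
      have := hv₁ v (Finset.mem_univ v)
      linarith
    have hq : (D v - D v₁) / (2 * (r : ℤ)) * (2 * (r : ℤ)) = D v - D v₁ :=
      Int.ediv_mul_cancel hd
    have hcnn : (c v : ℤ) = (D v - D v₁) / (2 * (r : ℤ)) :=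
      Int.toNat_of_nonneg (Int.ediv_nonneg hnn (le_of_lt hrpos))
    rw [hcnn, hq]
  refine ⟨c, ⟨v₁, ?_⟩, ?_⟩
  · have : (c v₁ : ℤ) * (2 * (r : ℤ)) = 0 := by rw [hkey v₁]; ring
    have := mul_eq_zero.mp this
    rcases this with h | h
    · exact_mod_cast h
    · exact absurd h (by positivity)
  · intro v u h
    have h1 := hkey v
    have h2 := hkey u
    have h3 := hedge v u h
    have : 2 * (((c v : ℤ) - (c u : ℤ)) * r) = 2 * ∑ a ∈ sideSet G v u, y a := by
      linarith [h1, h2, h3]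
    exact mul_left_cancel₀ two_ne_zero this

lemma decomp (hG : G.IsTree) {r b : ℕ} (hr : 0 < r) (dv : V → ℤ) (w w' : V → ℤ)
    (hsum : ∑ v, w v = ∑ v, dv v - G.edgeFinset.card * r * b)
    (hsum' : ∑ v, w' v = ∑ v, dv v - G.edgeFinset.card * r * b)
    (hcong : ∀ v, (r : ℤ) ∣ (dv v - w v)) (hcong' : ∀ v, (r : ℤ) ∣ (dv v - w' v)) :
    ∃ c : V → ℕ, (∃ v, c v = 0) ∧ w' = w + csum G r c ∧
      (∀ v u, G.Adj v u → ((c v : ℤ) - (c u : ℤ)) * r = ∑ a ∈ sideSet G v u, (w' a - w a)) := by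
  set y : V → ℤ := fun a => w' a - w a with hy
  have hy0 : ∑ a, y a = 0 := by
    rw [hy]
    simp only []
    rw [Finset.sum_sub_distrib, hsum, hsum']
    ring
  have hydvd : ∀ a, (r : ℤ) ∣ y a := by
    intro a
    have h2 : y a = (dv a - w a) - (dv a - w' a) := by simp only [hy]; ring
    rw [h2]
    exact dvd_sub (hcong a) (hcong' a)
  obtain ⟨c, hc0, hckey⟩ := exists_coeffs hG hr y hy0 hydvd
  refine ⟨c, hc0, ?_, hckey⟩
  have hvan := vanish hG (fun a => y a - csum G r c a) ?_ ?_
  · funext a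
    have := hvan a
    have hya : y a = w' a - w a := rfl
    simp only [Pi.add_apply]
    have : w' a - w a - csum G r c a = 0 := this
    linarith
  · rw [Finset.sum_sub_distrib, hy0, sum_total_csum]
    ring
  · intro v u h
    rw [Finset.sum_sub_distrib, sum_side_csum hG h, ← hckey v u h]
    ring

lemma tScaled_eq_top {r b : ℕ} (hr : 0 < r) (dv : V → ℤ) (w : V → ℤ) {v u : V}
    (hdvd : ∀ a, (r : ℤ) ∣ (dv a - w a))
    (hub : tScaled G dv b r w v u ≤ (b : ℤ) * r)
    (hlb : (b : ℤ) * r - r < tScaled G dv b r w v u) :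
    tScaled G dv b r w v u = (b : ℤ) * r := by
  have hd : (r : ℤ) ∣ ((b : ℤ) * r - tScaled G dv b r w v u) :=
    dvd_sub (dvd_mul_left _ _) (dvd_tScaled dv b r w v u hdvd)
  obtain ⟨k, hk⟩ := hd
  have hrpos : (0 : ℤ) < r := by exact_mod_cast hr
  have hk0 : 0 ≤ k := by
    by_contra hneg
    push_neg at hneg
    have : (r : ℤ) * k ≤ (r : ℤ) * (-1) := by
      apply mul_le_mul_of_nonneg_left (by omega) (le_of_lt hrpos)
    omega
  have hk1 : k < 1 := by
    by_contra hge
    push_neg at hge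
    have : (r : ℤ) * 1 ≤ (r : ℤ) * k :=
      mul_le_mul_of_nonneg_left hge (le_of_lt hrpos)
    omega
  have : k = 0 := by omega
  rw [this, mul_zero] at hk
  linarith

lemma exchange (hG : G.IsTree) {r b : ℕ} (hr : 0 < r) (hb : 0 < b) (dv : V → ℤ)
    (w : V → ℤ) (c : V → ℕ)
    (hw : inBarG G dv b r w) (hw' : inBarG G dv b r (w + csum G r c))
    (hdvd : ∀ a, (r : ℤ) ∣ (dv a - w a))
    (hs : ∑ a, w a = ∑ a, dv a - G.edgeFinset.card * r * b)
    (h0 : ∃ v, c v = 0) (hpos : ∃ v, 0 < c v) :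
    ∃ z, 0 < c z ∧ ∀ u, G.Adj z u → tScaled G dv b r w z u ≤ (b : ℤ) * r - r := by
  have hne : Nonempty V := hG.isConnected.nonempty
  by_contra hcon
  push_neg at hcon
  obtain ⟨zm, -, hzm⟩ := Finset.exists_max_image Finset.univ c Finset.univ_nonempty
  set K := c zm with hK
  obtain ⟨vp, hvp⟩ := hpos
  have hKpos : 0 < K := lt_of_lt_of_le hvp (hzm vp (Finset.mem_univ vp))
  obtain ⟨ρ, hρ0⟩ := h0
  -- every max vertex has a "bad" neighbor
  have hech : ∀ z : V, c z = K → ∃ t : V, G.Adj z t ∧ c t = K ∧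
      tScaled G dv b r w z t = (b : ℤ) * r := by
    intro z hz
    obtain ⟨t, ht1, ht2⟩ := hcon z (by omega)
    have htop : tScaled G dv b r w z t = (b : ℤ) * r :=
      tScaled_eq_top hr dv w hdvd (hw z t ht1).2 ht2
    refine ⟨t, ht1, ?_, htop⟩
    -- c t = K from hw'
    have hts := tScaled_add (G := G) dv b r w (csum G r c) z t
    rw [sum_side_csum hG ht1 r c] at hts
    have hub := (hw' z t ht1).2
    rw [hts, htop] at hub
    have hrpos : (0 : ℤ) < r := by exact_mod_cast hr
    have hle : (c z : ℤ) ≤ (c t : ℤ) := by nlinarith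
    have hge : c t ≤ K := hzm t (Finset.mem_univ t)
    have hKle : (K : ℤ) ≤ (c t : ℤ) := by rw [← hz]; exact hle
    have : K ≤ c t := by exact_mod_cast hKle
    omega
  choose! uf hu1 hu2 hu3 using hech
  set ch : V → V := fun z => if ρ ∈ sideSet G z (uf z) then z else uf z with hch
  set pa : V → V := fun z => if ρ ∈ sideSet G z (uf z) then uf z else z with hpa
  have hfacts : ∀ z, c z = K → G.Adj (ch z) (pa z) ∧ c (ch z) = K ∧ c (pa z) = K ∧
      ρ ∈ sideSet G (ch z) (pa z) ∧ s(ch z, pa z) = s(z, uf z) := by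
    intro z hz
    by_cases hρm : ρ ∈ sideSet G z (uf z)
    · have hc1 : ch z = z := by simp [hch, hρm]
      have hp1 : pa z = uf z := by simp [hpa, hρm]
      rw [hc1, hp1]
      exact ⟨hu1 z hz, hz, hu2 z hz, hρm, rfl⟩
    · have hρm' : ρ ∈ sideSet G (uf z) z := (cover hG (hu1 z hz) ρ).resolve_left hρm
      have hc1 : ch z = uf z := by simp [hch, hρm]
      have hp1 : pa z = z := by simp [hpa, hρm]
      rw [hc1, hp1]
      exact ⟨(hu1 z hz).symm, hu2 z hz, hz, hρm', Sym2.eq_swap⟩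
  set M : Finset V := Finset.univ.filter (fun v => c v = K) with hM
  have hMne : M.Nonempty := ⟨zm, by simp [hM, hK]⟩
  obtain ⟨zs, hzsM, hzs⟩ := Finset.exists_min_image M (fun z => G.dist z ρ) hMne
  have hzsK : c zs = K := by
    simp only [hM, Finset.mem_filter] at hzsM
    exact hzsM.2
  have hbrpos : (0 : ℤ) < (b : ℤ) * r := by
    have hb' : (0:ℤ) < (b:ℤ) := by exact_mod_cast hb
    have hr' : (0:ℤ) < (r:ℤ) := by exact_mod_cast hr
    exact mul_pos hb' hr'
  -- ch maps M into M.erase zs injectively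
  have hmaps : ∀ z ∈ M, ch z ∈ M.erase zs := by
    intro z hzM
    have hz : c z = K := by simpa [hM] using hzM
    obtain ⟨hadj, hchK, hpaK, hρmem, -⟩ := hfacts z hz
    refine Finset.mem_erase.2 ⟨?_, by simp [hM, hchK]⟩
    intro heq
    have hdist : G.dist (ch z) ρ = G.dist (pa z) ρ + 1 := dist_side hG hadj hρmem
    have hpaM : pa z ∈ M := by simp [hM, hpaK]
    have := hzs (pa z) hpaM
    rw [heq] at hdist
    omega
  have hinj : ∀ z ∈ M, ∀ z' ∈ M, ch z = ch z' → z = z' := by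
    intro z hzM z' hz'M heq
    have hz : c z = K := by simpa [hM] using hzM
    have hz' : c z' = K := by simpa [hM] using hz'M
    obtain ⟨hadj, -, -, hρmem, hsym⟩ := hfacts z hz
    obtain ⟨hadj', -, -, hρmem', hsym'⟩ := hfacts z' hz'
    rw [heq] at hadj hρmem
    have hpaeq : pa z = pa z' := branch_unique hG hadj hadj' hρmem hρmem'
    have hedgeeq : s(z, uf z) = s(z', uf z') := by
      rw [← hsym, ← hsym', heq, hpaeq]
    rw [Sym2.eq_iff] at hedgeeq
    rcases hedgeeq with ⟨h1, -⟩ | ⟨h1, h2⟩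
    · exact h1
    · -- z = uf z', uf z = z' : both tScaled equal b r, contradiction
      exfalso
      have ht1 := hu3 z hz
      have ht2 := hu3 z' hz'
      have hsymm := tScaled_symm hG dv b r w (hu1 z hz) hs
      rw [← h1] at ht2
      rw [← h2] at ht2
      rw [ht1, ht2] at hsymm
      linarith
  have hcard := Finset.card_le_card_of_injOn ch hmaps
    (fun a ha b hb h => hinj a (by simpa using ha) b (by simpa using hb) h)
  rw [Finset.card_erase_of_mem hzsM] at hcard
  have hMpos := Finset.card_pos.2 hMne
  omega

lemma build (hG : G.IsTree) {r b : ℕ} (hr : 0 < r) (dv : V → ℤ) :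
    ∀ (N : ℕ) (w : V → ℤ) (c : V → ℕ), (∑ v, c v) = N →
      (∑ a, w a = ∑ a, dv a - G.edgeFinset.card * r * b) →
      (∀ a, (r : ℤ) ∣ (dv a - w a)) →
      inBarG G dv b r w → inBarG G dv b r (w + csum G r c) → (∃ v, c v = 0) →
      ∃ l : List V, (∀ v, v ∈ l → c v ≠ 0) ∧ (l.map (Tvec G r)).sum = csum G r c ∧
        ∀ n : ℕ, inBarG G dv b r (w + ((l.take n).map (Tvec G r)).sum) := by
  intro N
  induction N with
  | zero =>
    intro w c hcN hs hdvd hw hw' h0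
    have hc : ∀ v, c v = 0 := by
      intro v
      have := (Finset.sum_eq_zero_iff).mp hcN v (Finset.mem_univ v)
      exact this
    have hcsum0 : csum G r c = 0 := by
      funext a
      unfold csum
      refine Finset.sum_eq_zero fun z _ => ?_
      rw [hc z]
      simp
    refine ⟨[], by simp, by simp [hcsum0], ?_⟩
    intro n
    simpa using hw
  | succ n ih =>
    intro w c hcN hs hdvd hw hw' h0
    by_cases hb : b = 0
    · exfalso
      subst hb
      have hzero : ∀ v u, G.Adj v u → tScaled G dv 0 r w v u = 0 := by
        intro v u h
        have h1 := hw v u h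
        simp only [Nat.cast_zero, zero_mul] at h1
        omega
      have hzero' : ∀ v u, G.Adj v u → ((c v : ℤ) - (c u : ℤ)) * r = 0 := by
        intro v u h
        have h1 := hw' v u h
        have hts := tScaled_add (G := G) dv 0 r w (csum G r c) v u
        rw [sum_side_csum hG h r c, hzero v u h] at hts
        simp only [Nat.cast_zero, zero_mul] at h1
        omega
      have hconst : ∀ v u : V, (0 : ℤ) ∣ ((c v : ℤ) - (c u : ℤ)) := by
        intro v u
        refine reach_dvd (G := G) (fun x => (c x : ℤ)) 0 ?_ (hG.isConnected.preconnected v u)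
        intro a e hae
        have := hzero' a e hae
        have hrne : (r : ℤ) ≠ 0 := by exact_mod_cast hr.ne'
        rw [zero_dvd_iff]
        rcases mul_eq_zero.mp this with h | h
        · simpa using h
        · exact absurd h hrne
      obtain ⟨v₀, hv₀⟩ := h0
      have hcall : ∀ v, c v = 0 := by
        intro v
        have := hconst v v₀
        rw [zero_dvd_iff, sub_eq_zero] at this
        simp only [hv₀, Nat.cast_zero] at this
        exact_mod_cast this
      rw [Finset.sum_congr rfl (fun v _ => hcall v)] at hcN
      simp at hcN
    · have hbpos : 0 < b := Nat.pos_of_ne_zero hb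
      have hpos : ∃ v, 0 < c v := by
        by_contra hno
        push_neg at hno
        have : ∀ v, c v = 0 := fun v => Nat.le_zero.mp (hno v)
        rw [Finset.sum_congr rfl (fun v _ => this v)] at hcN
        simp at hcN
      obtain ⟨z, hz, hzedge⟩ := exchange hG hr hbpos dv w c hw hw' hdvd hs h0 hpos
      set w₁ := w + Tvec G r z with hw₁def
      set c₁ : V → ℕ := Function.update c z (c z - 1) with hc₁def
      have hczpos : 1 ≤ c z := hz
      have hcastz : ((c z - 1 : ℕ) : ℤ) = (c z : ℤ) - 1 := by
        push_cast [Nat.cast_sub hczpos]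
        ring
      have hcsplit : ∀ a, csum G r c a = Tvec G r z a + csum G r c₁ a := by
        intro a
        unfold csum
        have hterm : ∀ v : V, (c v : ℤ) * Tvec G r v a
            = (if v = z then Tvec G r z a else 0) + (c₁ v : ℤ) * Tvec G r v a := by
          intro v
          by_cases hvz : v = z
          · subst hvz
            rw [hc₁def]
            simp only [Function.update_self, ite_true]
            rw [hcastz]
            ring
          · rw [hc₁def]
            simp only [Function.update_of_ne hvz, hvz, ite_false]
            ring
        rw [Finset.sum_congr rfl (fun v _ => hterm v), Finset.sum_add_distrib,
          Finset.sum_ite_eq' Finset.univ z (fun _ => Tvec G r z a)]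
        simp
      have hw₁sum : ∑ a, w₁ a = ∑ a, dv a - G.edgeFinset.card * r * b := by
        rw [hw₁def]
        have : ∑ a, (w + Tvec G r z) a = ∑ a, w a + ∑ a, Tvec G r z a := by
          simp only [Pi.add_apply]
          rw [Finset.sum_add_distrib]
        rw [this, sum_Tvec_total, hs]
        ring
      have hw₁dvd : ∀ a, (r : ℤ) ∣ (dv a - w₁ a) := by
        intro a
        rw [hw₁def]
        have : dv a - (w + Tvec G r z) a = (dv a - w a) - Tvec G r z a := by
          simp only [Pi.add_apply]; ring
        rw [this]
        exact dvd_sub (hdvd a) (dvd_Tvec r z a)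
      have hrpos : (0 : ℤ) < r := by exact_mod_cast hr
      have hw₁bar : inBarG G dv b r w₁ := by
        intro v u hadj
        have ht := tScaled_add (G := G) dv b r w (Tvec G r z) v u
        rw [sum_Tvec_side hG hadj r z] at ht
        rcases hw v u hadj with ⟨hl, hu'⟩
        rw [hw₁def]
        by_cases hzv : z = v
        · subst hzv
          have hzu : z ≠ u := hadj.ne
          rw [ht]
          simp only [ite_true, hzu, ite_false]
          constructor
          · linarith
          · have := hzedge u hadj
            linarith
        · by_cases hzu : z = u
          · subst hzu
            rw [ht]
            simp only [hzv, ite_false, ite_true]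
            constructor
            · have hsymm := tScaled_symm hG dv b r w hadj hs
              have := hzedge v hadj.symm
              linarith
            · linarith
          · rw [ht]
            simp only [hzv, hzu, ite_false]
            constructor
            · linarith
            · linarith
      have hw'₁ : w + csum G r c = w₁ + csum G r c₁ := by
        funext a
        simp only [Pi.add_apply, hw₁def]
        rw [hcsplit a]
        ring
      have hc₁N : ∑ v, c₁ v = n := by
        rw [hc₁def]
        rw [Finset.sum_update_of_mem (Finset.mem_univ z), Finset.sdiff_singleton_eq_erase]
        have := Finset.add_sum_erase Finset.univ c (Finset.mem_univ z)
        omega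
      have h0₁ : ∃ v, c₁ v = 0 := by
        obtain ⟨v₀, hv₀⟩ := h0
        have hv₀z : v₀ ≠ z := by
          intro heq
          rw [heq] at hv₀
          omega
        exact ⟨v₀, by rw [hc₁def]; simp [Function.update_of_ne hv₀z, hv₀]⟩
      obtain ⟨l₁, hl₁mem, hl₁sum, hl₁bar⟩ :=
        ih w₁ c₁ hc₁N hw₁sum hw₁dvd hw₁bar (by rw [← hw'₁]; exact hw') h0₁
      refine ⟨z :: l₁, ?_, ?_, ?_⟩
      · intro v hv
        rcases List.mem_cons.mp hv with rfl | hv₁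
        · omega
        · have := hl₁mem v hv₁
          by_cases hvz : v = z
          · subst hvz; omega
          · rw [hc₁def] at this
            rwa [Function.update_of_ne hvz] at this
      · rw [List.map_cons, List.sum_cons, hl₁sum]
        funext a
        simp only [Pi.add_apply]
        rw [hcsplit a]
      · intro m
        cases m with
        | zero => simpa using hw
        | succ k =>
          rw [List.take_succ_cons, List.map_cons, List.sum_cons]
          have : w + (Tvec G r z + ((l₁.take k).map (Tvec G r)).sum)
              = w₁ + ((l₁.take k).map (Tvec G r)).sum := by
            rw [hw₁def]
            funext a
            simp only [Pi.add_apply]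
            ring
          rw [this]
          exact hl₁bar k

end Aux15

/-- Proposition `type-ii-min-paths`: for any `w, w'` in
`bar G_II`, there exists a minimal path from `w` to `w'` (a sequence of vertices
`v₁,…,v_m` not covering all of `V(Γ)` with `w' = w + ∑ T_{vᵢ}`) all of whose
intermediate points lie in `bar G_II`. -/
theorem stmt_15 {V : Type*} [Fintype V] [DecidableEq V] (G : SimpleGraph V)
    [DecidableRel G.Adj] (hG : G.IsTree) (r b : ℕ) (hr : 0 < r)
    (dv : V → ℤ) (w w' : V → ℤ)
    (hsum : ∑ v, w v = ∑ v, dv v - G.edgeFinset.card * r * b)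
    (hsum' : ∑ v, w' v = ∑ v, dv v - G.edgeFinset.card * r * b)
    (hcong : ∀ v, (r : ℤ) ∣ (dv v - w v)) (hcong' : ∀ v, (r : ℤ) ∣ (dv v - w' v))
    (hw : inBarG G dv b r w) (hw' : inBarG G dv b r w') :
    ∃ l : List V, (∃ v : V, v ∉ l) ∧
      w' = w + (l.map (Tvec G r)).sum ∧
      ∀ n : ℕ, inBarG G dv b r (w + ((l.take n).map (Tvec G r)).sum) := by
  classical
  obtain ⟨c, hc0, hdecomp, -⟩ := Aux15.decomp hG hr dv w w' hsum hsum' hcong hcong'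
  have hw'' : inBarG G dv b r (w + csum G r c) := by rw [← hdecomp]; exact hw'
  obtain ⟨l, hlmem, hlsum, hlbar⟩ :=
    Aux15.build hG hr dv (∑ v, c v) w c rfl hsum hcong hw hw'' hc0
  refine ⟨l, ?_, ?_, hlbar⟩
  · obtain ⟨v₀, hv₀⟩ := hc0
    exact ⟨v₀, fun hmem => hlmem v₀ hmem hv₀⟩
  · rw [hlsum]
    exact hdecomp
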